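/- Let H have unique ground state |ψ₀⟩ with gap ≥ Δ and let f satisfy f̂(−ν) = 1 for ν ≤ 0 and f̂(−ν) = 0 for ν ≥ Δ (on Bohr frequencies). Then for any operator A: (i) Â_f |ψ₀⟩ = ⟨ψ₀|A|ψ₀⟩ · |ψ₀⟩, and (ii) ⟨ψ₀| Â_f = ⟨ψ₀| A. -/
import Mathlib

open Matrix Finset

noncomputable section

/-- The rank-one operator `|ψ i⟩⟨ψ i|`. -/
def ketbra {n : ℕ} (ψ : Fin n → Fin n → ℂ) (i : Fin n) : Matrix (Fin n) (Fin n) ℂ :=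
  Matrix.vecMulVec (ψ i) (star (ψ i))

/-- The set of Bohr frequencies `{E i - E j}` of the Hamiltonian. -/
def bohrSet {n : ℕ} (E : Fin n → ℝ) : Finset ℝ :=
  Finset.image (fun p : Fin n × Fin n => E p.1 - E p.2) Finset.univ

/-- The Bohr-frequency component `A_ν = ∑_{E i - E j = ν} |ψ i⟩⟨ψ i| A |ψ j⟩⟨ψ j|`. -/
def bohrComp {n : ℕ} (ψ : Fin n → Fin n → ℂ) (E : Fin n → ℝ)
    (A : Matrix (Fin n) (Fin n) ℂ) (ν : ℝ) : Matrix (Fin n) (Fin n) ℂ :=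
  ∑ i, ∑ j, if E i - E j = ν then ketbra ψ i * A * ketbra ψ j else 0

/-- The filtered operator `Â_f = ∑_ν f̂(−ν) A_ν`, specified via the Fourier transform `f̂`. -/
def sumFiltered {n : ℕ} (ψ : Fin n → Fin n → ℂ) (E : Fin n → ℝ)
    (A : Matrix (Fin n) (Fin n) ℂ) (fhat : ℝ → ℂ) : Matrix (Fin n) (Fin n) ℂ :=
  ∑ ν ∈ bohrSet E, fhat (-ν) • bohrComp ψ E A ν

lemma mem_bohrSet {n : ℕ} (E : Fin n → ℝ) (i j : Fin n) : E i - E j ∈ bohrSet E :=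
  Finset.mem_image.2 ⟨(i, j), Finset.mem_univ _, rfl⟩

lemma ketbra_mulVec {n : ℕ} (ψ : Fin n → Fin n → ℂ) (i : Fin n) (x : Fin n → ℂ) :
    (ketbra ψ i).mulVec x = (star (ψ i) ⬝ᵥ x) • ψ i := by
  ext k
  simp only [ketbra, Matrix.mulVec, Matrix.vecMulVec_apply, dotProduct, Pi.smul_apply,
    smul_eq_mul]
  rw [Finset.sum_mul]
  exact Finset.sum_congr rfl fun t _ => by ring

lemma vecMul_ketbra {n : ℕ} (ψ : Fin n → Fin n → ℂ) (i : Fin n) (y : Fin n → ℂ) :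
    Matrix.vecMul y (ketbra ψ i) = (y ⬝ᵥ ψ i) • star (ψ i) := by
  ext k
  simp only [ketbra, Matrix.vecMul, Matrix.vecMulVec_apply, dotProduct, Pi.smul_apply,
    smul_eq_mul]
  rw [Finset.sum_mul]
  exact Finset.sum_congr rfl fun t _ => by ring


lemma sum_mulVec'' {n : ℕ} {ι : Type*} (s : Finset ι) (M : ι → Matrix (Fin n) (Fin n) ℂ)
    (x : Fin n → ℂ) : (∑ i ∈ s, M i).mulVec x = ∑ i ∈ s, (M i).mulVec x :=
  map_sum (AddMonoidHom.mk' (fun M : Matrix (Fin n) (Fin n) ℂ => M.mulVec x)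
    (fun A B => Matrix.add_mulVec A B x)) M s

lemma sum_vecMul'' {n : ℕ} {ι : Type*} (s : Finset ι) (M : ι → Matrix (Fin n) (Fin n) ℂ)
    (y : Fin n → ℂ) : Matrix.vecMul y (∑ i ∈ s, M i) = ∑ i ∈ s, Matrix.vecMul y (M i) :=
  map_sum (AddMonoidHom.mk' (fun M : Matrix (Fin n) (Fin n) ℂ => Matrix.vecMul y M)
    (fun A B => Matrix.vecMul_add A B y)) M s

lemma sumFiltered_eq {n : ℕ} (ψ : Fin n → Fin n → ℂ) (E : Fin n → ℝ)
    (A : Matrix (Fin n) (Fin n) ℂ) (fhat : ℝ → ℂ) :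
    sumFiltered ψ E A fhat
      = ∑ i, ∑ j, fhat (-(E i - E j)) • (ketbra ψ i * A * ketbra ψ j) := by
  unfold sumFiltered bohrComp
  have step : ∀ ν ∈ bohrSet E,
      fhat (-ν) • ∑ i, ∑ j, (if E i - E j = ν then ketbra ψ i * A * ketbra ψ j else 0)
        = ∑ i, ∑ j,
            (if E i - E j = ν then fhat (-(E i - E j)) • (ketbra ψ i * A * ketbra ψ j) else 0) := by
    intro ν _
    rw [Finset.smul_sum]
    refine Finset.sum_congr rfl fun i _ => ?_
    rw [Finset.smul_sum]
    refine Finset.sum_congr rfl fun j _ => ?_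
    by_cases h : E i - E j = ν
    · rw [if_pos h, if_pos h, h]
    · rw [if_neg h, if_neg h, smul_zero]
  rw [Finset.sum_congr rfl step, Finset.sum_comm]
  refine Finset.sum_congr rfl fun i _ => ?_
  rw [Finset.sum_comm]
  refine Finset.sum_congr rfl fun j _ => ?_
  rw [Finset.sum_ite_eq (bohrSet E) (E i - E j)
    (fun _ => fhat (-(E i - E j)) • (ketbra ψ i * A * ketbra ψ j)), if_pos (mem_bohrSet E i j)]

lemma vecMul_smulMat {n : ℕ} (y : Fin n → ℂ) (c : ℂ) (M : Matrix (Fin n) (Fin n) ℂ) :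
    Matrix.vecMul y (c • M) = c • Matrix.vecMul y M := by
  ext k
  simp only [Matrix.vecMul, dotProduct, Matrix.smul_apply, Pi.smul_apply, smul_eq_mul,
    Finset.mul_sum]
  exact Finset.sum_congr rfl fun t _ => by ring

lemma triple_mulVec {n : ℕ} (ψ : Fin n → Fin n → ℂ) (A : Matrix (Fin n) (Fin n) ℂ)
    (i j : Fin n) (x : Fin n → ℂ) :
    (ketbra ψ i * A * ketbra ψ j).mulVec x
      = (star (ψ j) ⬝ᵥ x) • (star (ψ i) ⬝ᵥ A.mulVec (ψ j)) • ψ i := by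
  rw [Matrix.mul_assoc, ← Matrix.mulVec_mulVec, ← Matrix.mulVec_mulVec, ketbra_mulVec ψ j x,
    Matrix.mulVec_smul, Matrix.mulVec_smul, ketbra_mulVec ψ i]

lemma triple_vecMul {n : ℕ} (ψ : Fin n → Fin n → ℂ) (A : Matrix (Fin n) (Fin n) ℂ)
    (i j : Fin n) (y : Fin n → ℂ) :
    Matrix.vecMul y (ketbra ψ i * A * ketbra ψ j)
      = (y ⬝ᵥ ψ i) • Matrix.vecMul (star (ψ i)) (A * ketbra ψ j) := by
  rw [Matrix.mul_assoc, ← Matrix.vecMul_vecMul, vecMul_ketbra, Matrix.smul_vecMul]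
/-- with `f̂(−ν) = 1` for `ν ≤ 0` and `f̂(−ν) = 0` for `ν ≥ Δ` (on Bohr
frequencies), (i) `Â_f |ψ₀⟩ = ⟨ψ₀|A|ψ₀⟩ |ψ₀⟩` and (ii) `⟨ψ₀| Â_f = ⟨ψ₀| A`. -/
theorem filter_fixes_ground_state {d : ℕ} (ψ : Fin (d + 1) → Fin (d + 1) → ℂ)
    (E : Fin (d + 1) → ℝ) (H A : Matrix (Fin (d + 1)) (Fin (d + 1)) ℂ) (Δ : ℝ)
    (fhat : ℝ → ℂ)
    (horth : ∀ i j, star (ψ i) ⬝ᵥ ψ j = if i = j then (1 : ℂ) else 0)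
    (hcomplete : ∑ i, ketbra ψ i = 1)
    (hH : H = ∑ i, (E i : ℂ) • ketbra ψ i)
    (hgap : ∀ i : Fin (d + 1), i ≠ 0 → E 0 + Δ ≤ E i)
    (hΔ : 0 < Δ)
    (hfhi : ∀ ν ∈ bohrSet E, Δ ≤ ν → fhat (-ν) = 0)
    (hflo : ∀ ν ∈ bohrSet E, ν ≤ 0 → fhat (-ν) = 1) :
    (sumFiltered ψ E A fhat).mulVec (ψ 0)
        = (star (ψ 0) ⬝ᵥ A.mulVec (ψ 0)) • ψ 0 ∧
      Matrix.vecMul (star (ψ 0)) (sumFiltered ψ E A fhat)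
        = Matrix.vecMul (star (ψ 0)) A := by
  rw [sumFiltered_eq]
  constructor
  · -- (i)
    rw [sum_mulVec'']
    have hterm : ∀ i : Fin (d + 1),
        (∑ j, fhat (-(E i - E j)) • (ketbra ψ i * A * ketbra ψ j)).mulVec (ψ 0)
          = fhat (-(E i - E 0)) • (star (ψ i) ⬝ᵥ A.mulVec (ψ 0)) • ψ i := by
      intro i
      rw [sum_mulVec'']
      rw [Finset.sum_eq_single 0]
      · rw [Matrix.smul_mulVec, triple_mulVec, horth 0 0, if_pos rfl, one_smul]
      · intro j _ hj
        rw [Matrix.smul_mulVec, triple_mulVec, horth j 0, if_neg hj, zero_smul,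
          smul_zero]
      · simp
    simp only [hterm]
    rw [Finset.sum_eq_single 0]
    · have h0 : fhat (-(E 0 - E 0)) = 1 := hflo _ (mem_bohrSet E 0 0) (by simp)
      rw [h0, one_smul]
    · intro i _ hi
      have hz : fhat (-(E i - E 0)) = 0 :=
        hfhi _ (mem_bohrSet E i 0) (by linarith [hgap i hi])
      rw [hz, zero_smul]
    · simp
  · -- (ii)
    rw [sum_vecMul'']
    rw [Finset.sum_eq_single 0]
    · rw [sum_vecMul'']
      have h1 : ∀ j : Fin (d + 1), fhat (-(E 0 - E j)) = 1 := by
        intro j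
        refine hflo _ (mem_bohrSet E 0 j) ?_
        by_cases hj : j = 0
        · simp [hj]
        · linarith [hgap j hj]
      have hterm : ∀ j : Fin (d + 1),
          Matrix.vecMul (star (ψ 0)) (fhat (-(E 0 - E j)) • (ketbra ψ 0 * A * ketbra ψ j))
            = Matrix.vecMul (star (ψ 0)) (A * ketbra ψ j) := by
        intro j
        rw [vecMul_smulMat, h1 j, one_smul, triple_vecMul, horth 0 0, if_pos rfl, one_smul]
      simp only [hterm]
      rw [← sum_vecMul'', ← Finset.mul_sum, hcomplete, Matrix.mul_one]
    · intro i _ hi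
      rw [sum_vecMul'']
      refine Finset.sum_eq_zero fun j _ => ?_
      rw [vecMul_smulMat, triple_vecMul, horth 0 i, if_neg (Ne.symm hi), zero_smul, smul_zero]
    · simp

end
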